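/- Let c ∈ (0,1] and q ∈ (0,1), and let f_k = c q^k ∏_{i=1}^{k-1}(1 - c q^i). Then there exists α with 1 < α < q^{-1} such that ∑_{k ≥ 1} α^k f_k = 1. -/

import Mathlib

open Finset

theorem stmt_4 (c q : ℝ) (hc : 0 < c) (hc1 : c ≤ 1) (hq : 0 < q) (hq1 : q < 1)
    (f : ℕ → ℝ) (hf : ∀ k, f k = c * q ^ k * ∏ i ∈ Finset.Icc 1 (k - 1), (1 - c * q ^ i)) :
    ∃ α : ℝ, 1 < α ∧ α < q⁻¹ ∧ ∑' k : ℕ, α ^ (k + 1) * f (k + 1) = 1 := by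
  have hq0 : (0:ℝ) ≤ q := hq.le
  set P : ℕ → ℝ := fun n => ∏ i ∈ Finset.Icc 1 n, (1 - c * q ^ i) with hPdef
  have hfac : ∀ i, 1 ≤ i → c * q ^ i < 1 := by
    intro i hi
    have h1 : q ^ i ≤ q ^ 1 := pow_le_pow_of_le_one hq0 hq1.le hi
    have h2 : (0:ℝ) ≤ q ^ i := pow_nonneg hq0 i
    nlinarith
  have hfac0 : ∀ i, (0:ℝ) ≤ c * q ^ i := fun i => by positivity
  have hPpos : ∀ n, 0 < P n := by
    intro n
    exact Finset.prod_pos fun i hi => by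
      have := (Finset.mem_Icc.mp hi).1
      linarith [hfac i this]
  have hPle1 : ∀ n, P n ≤ 1 := by
    intro n
    refine Finset.prod_le_one (fun i hi => ?_) (fun i hi => ?_)
    · have := (Finset.mem_Icc.mp hi).1
      linarith [hfac i this]
    · linarith [hfac0 i]
  have hPsucc : ∀ n, P (n + 1) = P n * (1 - c * q ^ (n + 1)) := by
    intro n
    exact Finset.prod_Icc_succ_top (Nat.succ_le_succ (Nat.zero_le n)) _
  have hPanti : ∀ m n, m ≤ n → P n ≤ P m := by
    have : ∀ n, P (n + 1) ≤ P n := by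
      intro n
      rw [hPsucc n]
      nlinarith [hPpos n, hfac (n+1) (Nat.succ_le_succ (Nat.zero_le n)), hfac0 (n+1)]
    exact fun m n h => antitone_nat_of_succ_le this h
  have hfk : ∀ k : ℕ, f (k + 1) = c * q ^ (k + 1) * P k := by
    intro k
    rw [hf]
    simp
    exact Or.inl rfl
  have hf_nonneg : ∀ k : ℕ, 0 ≤ f (k + 1) := by
    intro k; rw [hfk]
    exact mul_nonneg (by positivity) (hPpos k).le
  have hf_le : ∀ k : ℕ, f (k + 1) ≤ c * q ^ (k + 1) := by
    intro k; rw [hfk]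
    nlinarith [hPle1 k, hfac0 (k+1)]
  have hsumrange : ∀ n, ∑ k ∈ Finset.range n, f (k + 1) = 1 - P n := by
    intro n
    induction n with
    | zero => simp [hPdef]
    | succ n ih =>
      rw [Finset.sum_range_succ, ih, hfk, hPsucc]
      ring
  -- choose N with tail sum small
  obtain ⟨N, hN⟩ := exists_pow_lt_of_lt_one (show (0:ℝ) < (1 - q) / (2 * c) from div_pos (by linarith) (by positivity)) hq1
  rw [lt_div_iff₀ (by positivity : (0:ℝ) < 2 * c)] at hN
  have hqN : (0:ℝ) ≤ q ^ N := pow_nonneg hq0 N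
  have htail : ∀ m, ∑ j ∈ Finset.range m, c * q ^ (N + 1 + j) ≤ 1 / 2 := by
    intro m
    have h1 : ∑ j ∈ Finset.range m, c * q ^ (N + 1 + j)
        = c * q ^ (N + 1) * ∑ j ∈ Finset.range m, q ^ j := by
      rw [Finset.mul_sum]
      exact Finset.sum_congr rfl fun j _ => by rw [pow_add]; ring
    have h2 : ∑ j ∈ Finset.range m, q ^ j ≤ (1 - q)⁻¹ := by
      have := Summable.sum_le_tsum (Finset.range m) (fun i _ => pow_nonneg hq0 i)
        (summable_geometric_of_lt_one hq0 hq1)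
      rwa [tsum_geometric_of_lt_one hq0 hq1] at this
    have h3 : c * q ^ (N + 1) ≤ (1 - q) / 2 := by
      have : q ^ (N + 1) = q ^ N * q := pow_succ q N
      nlinarith
    have h4 : (0:ℝ) < 1 - q := by linarith
    calc ∑ j ∈ Finset.range m, c * q ^ (N + 1 + j)
        = c * q ^ (N + 1) * ∑ j ∈ Finset.range m, q ^ j := h1
      _ ≤ ((1 - q) / 2) * (1 - q)⁻¹ := by
          apply mul_le_mul h3 h2 (Finset.sum_nonneg fun i _ => pow_nonneg hq0 i) (by linarith)
      _ = 1 / 2 := by field_simp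
  have hlow : ∀ m, P N * (1 - ∑ j ∈ Finset.range m, c * q ^ (N + 1 + j)) ≤ P (N + m) := by
    intro m
    induction m with
    | zero => simp
    | succ m ih =>
      have hidx : N + (m + 1) = (N + m) + 1 := by omega
      rw [hidx, hPsucc (N + m), Finset.sum_range_succ]
      have hidx2 : N + 1 + m = N + m + 1 := by omega
      rw [hidx2]
      have ha0 : (0:ℝ) ≤ c * q ^ (N + m + 1) := hfac0 _
      have ha1 : c * q ^ (N + m + 1) < 1 := hfac _ (Nat.succ_le_succ (Nat.zero_le _))
      have hS0 : (0:ℝ) ≤ ∑ j ∈ Finset.range m, c * q ^ (N + 1 + j) :=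
        Finset.sum_nonneg fun j _ => hfac0 _
      nlinarith [hPpos N, mul_le_mul_of_nonneg_right ih (by linarith : (0:ℝ) ≤ 1 - c * q ^ (N + m + 1)),
        mul_nonneg (mul_nonneg (hPpos N).le hS0) ha0]
  have hPlb : ∀ n, P N / 2 ≤ P n := by
    intro n
    rcases le_or_gt N n with h | h
    · obtain ⟨m, rfl⟩ := Nat.exists_eq_add_of_le h
      have := hlow m
      have := htail m
      nlinarith [hPpos N, hlow m, htail m]
    · have := hPanti n N h.le
      nlinarith [hPpos N]
  set δ : ℝ := P N / 2 with hδdef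
  have hδ : 0 < δ := by have := hPpos N; positivity
  -- summability
  have hsummable : ∀ α : ℝ, 0 ≤ α → α * q < 1 →
      Summable (fun k : ℕ => α ^ (k + 1) * f (k + 1)) := by
    intro α hα hαq
    have hαq0 : 0 ≤ α * q := by positivity
    have hgeo : Summable (fun k : ℕ => (α * q) ^ k) := summable_geometric_of_lt_one hαq0 hαq
    have hgeo' : Summable (fun k : ℕ => c * (α * q) ^ (k + 1)) := by
      refine (hgeo.mul_left (c * (α * q))).congr fun k => ?_
      rw [pow_succ]; ring
    refine Summable.of_nonneg_of_le (fun k => mul_nonneg (pow_nonneg hα _) (hf_nonneg k)) (fun k => ?_) hgeo'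
    calc α ^ (k + 1) * f (k + 1) ≤ α ^ (k + 1) * (c * q ^ (k + 1)) := by
          apply mul_le_mul_of_nonneg_left (hf_le k) (by positivity)
      _ = c * (α * q) ^ (k + 1) := by rw [mul_pow]; ring
  set G : ℝ → ℝ := fun α => ∑' k : ℕ, α ^ (k + 1) * f (k + 1) with hGdef
  -- G 1 < 1
  have hG1 : G 1 ≤ 1 - δ := by
    apply Real.tsum_le_of_sum_range_le (fun k => by simpa using hf_nonneg k)
    intro n
    simp only [one_pow, one_mul]
    rw [hsumrange n]
    linarith [hPlb n]
  -- choose r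
  set x : ℝ := (max q (1 / (1 + c * δ)) + 1) / 2 with hxdef
  have hcd : 0 < 1 + c * δ := by positivity
  have hx1 : x < 1 := by
    have h1 : 1 / (1 + c * δ) < 1 := by
      rw [div_lt_one hcd]; nlinarith
    have : max q (1 / (1 + c * δ)) < 1 := max_lt hq1 h1
    rw [hxdef]; linarith
  have hxq : q < x := by
    have : q ≤ max q (1 / (1 + c * δ)) := le_max_left _ _
    rw [hxdef]; linarith [hq1]
  have hx0 : 0 < x := lt_trans hq hxq
  have hxc : 1 / (1 + c * δ) < x := by
    have h1 : 1 / (1 + c * δ) ≤ max q (1 / (1 + c * δ)) := le_max_right _ _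
    have h2 : 1 / (1 + c * δ) < 1 := by rw [div_lt_one hcd]; nlinarith
    rw [hxdef]; linarith
  set r : ℝ := x / q with hrdef
  have hr1 : 1 < r := by rw [hrdef, lt_div_iff₀ hq]; linarith
  have hrq : r * q = x := by rw [hrdef]; field_simp
  have hrinv : r < q⁻¹ := by
    rw [hrdef, div_lt_iff₀ hq, inv_mul_cancel₀ hq.ne']
    exact hx1
  have hr0 : 0 ≤ r := by linarith
  -- G r > 1
  have hGr : 1 < G r := by
    have hgeo : Summable (fun k : ℕ => x ^ k) := summable_geometric_of_lt_one hx0.le hx1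
    have hlower : ∀ k : ℕ, c * δ * x ^ (k + 1) ≤ r ^ (k + 1) * f (k + 1) := by
      intro k
      rw [hfk, ← hrq, mul_pow]
      have h1 : δ ≤ P k := hPlb k
      have hrk : (0:ℝ) ≤ r ^ (k+1) := pow_nonneg hr0 _
      have hqk : (0:ℝ) ≤ q ^ (k+1) := pow_nonneg hq0 _
      nlinarith [mul_le_mul_of_nonneg_left h1 (mul_nonneg (mul_nonneg hrk hqk) hc.le)]
    have hsum1 : Summable (fun k : ℕ => c * δ * x ^ (k + 1)) := by
      refine (hgeo.mul_left (c * δ * x)).congr fun k => ?_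
      rw [pow_succ]; ring
    have hsum2 : Summable (fun k : ℕ => r ^ (k + 1) * f (k + 1)) :=
      hsummable r hr0 (by rw [hrq]; exact hx1)
    have h := Summable.tsum_le_tsum hlower hsum1 hsum2
    have hval : ∑' k : ℕ, c * δ * x ^ (k + 1) = c * δ * x * (1 - x)⁻¹ := by
      have : ∑' k : ℕ, c * δ * x ^ (k + 1) = ∑' k : ℕ, (c * δ * x) * x ^ k :=
        tsum_congr fun k => by rw [pow_succ]; ring
      rw [this, tsum_mul_left, tsum_geometric_of_lt_one hx0.le hx1]
    have hx1' : 0 < 1 - x := by linarith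
    have hgt : 1 < c * δ * x * (1 - x)⁻¹ := by
      rw [← div_eq_mul_inv, lt_div_iff₀ hx1']
      rw [div_lt_iff₀ hcd] at hxc
      nlinarith
    calc (1:ℝ) < c * δ * x * (1 - x)⁻¹ := hgt
      _ = ∑' k : ℕ, c * δ * x ^ (k + 1) := hval.symm
      _ ≤ G r := h
  -- continuity
  have hcont : ContinuousOn G (Set.Icc 1 r) := by
    apply continuousOn_tsum (u := fun k : ℕ => c * x ^ (k + 1))
    · intro k
      exact (continuous_pow (k+1)).continuousOn.mul continuousOn_const
    · have hgeo : Summable (fun k : ℕ => x ^ k) := summable_geometric_of_lt_one hx0.le hx1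
      refine (hgeo.mul_left (c * x)).congr fun k => ?_
      rw [pow_succ]; ring
    · intro k α hα
      obtain ⟨hα1, hα2⟩ := hα
      have hα0 : (0:ℝ) ≤ α := by linarith
      have h1 : α ^ (k + 1) * f (k + 1) ≤ c * x ^ (k + 1) := by
        calc α ^ (k + 1) * f (k + 1) ≤ r ^ (k + 1) * (c * q ^ (k + 1)) := by
              apply mul_le_mul (pow_le_pow_left₀ hα0 hα2 _) (hf_le k) (hf_nonneg k)
                (pow_nonneg hr0 _)
          _ = c * x ^ (k + 1) := by rw [← hrq, mul_pow]; ring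
      have h0 : 0 ≤ α ^ (k + 1) * f (k + 1) := mul_nonneg (pow_nonneg hα0 _) (hf_nonneg k)
      rw [Real.norm_eq_abs, abs_of_nonneg h0]
      exact h1
  -- IVT
  have h1mem : (1:ℝ) ∈ Set.Ioo (G 1) (G r) := ⟨by linarith, hGr⟩
  obtain ⟨α, hαmem, hGα⟩ := intermediate_value_Ioo hr1.le hcont h1mem
  exact ⟨α, hαmem.1, lt_trans hαmem.2 hrinv, hGα⟩
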